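/- arXiv:2404.04348 — 2 statements merged into one kernel-verified Lean document; each statement's English description precedes it below -/
import Mathlib

section
/- Let T be a bounded operator on a complex Banach space H. Suppose there exist operators A1, A2 in the double commutant {T}'' of T such that A1 A2 = A2 A1 = 0 and A1² ≠ 0, A2² ≠ 0. Then the lattice of hyperinvariant subspaces of T is not totally ordered by inclusion; in particular, setting N_k = ker A_k and M_k = closure(A_k H), one has M_k ⊄ M_l and N_k ⊄ N_l for k ≠ l. -/
open scoped Real
open MeasureTheory Filter

variable {H : Type*} [NormedAddCommGroup H] [NormedSpace ℂ H] [CompleteSpace H]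

/-- The commutant of an operator `T`. -/
def commutant (T : H →L[ℂ] H) : Set (H →L[ℂ] H) := {A | A * T = T * A}

/-- The double commutant of an operator `T`. -/
def bicommutant (T : H →L[ℂ] H) : Set (H →L[ℂ] H) :=
  {A | ∀ B ∈ commutant T, A * B = B * A}

/-- A (closed) subspace invariant under every operator commuting with `T`. -/
def IsHyperinvariant (T : H →L[ℂ] H) (M : Submodule ℂ H) : Prop :=
  IsClosed (M : Set H) ∧ ∀ A ∈ commutant T, ∀ x ∈ M, A x ∈ M

omit [CompleteSpace H] in
lemma range_le_ker {A B : H →L[ℂ] H} (h : A * B = 0) :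
    LinearMap.range (B : H →ₗ[ℂ] H) ≤ LinearMap.ker (A : H →ₗ[ℂ] H) := by
  rintro x ⟨y, rfl⟩
  have : (A * B) y = 0 := by rw [h]; rfl
  simpa [ContinuousLinearMap.mul_apply] using this

omit [CompleteSpace H] in
lemma closure_range_le_ker {A B : H →L[ℂ] H} (h : A * B = 0) :
    (LinearMap.range (B : H →ₗ[ℂ] H)).topologicalClosure ≤ LinearMap.ker (A : H →ₗ[ℂ] H) :=
  Submodule.topologicalClosure_minimal _ (range_le_ker h) (ContinuousLinearMap.isClosed_ker A)

omit [CompleteSpace H] in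
lemma hyper_closure_range {T A : H →L[ℂ] H} (h : A ∈ bicommutant T) :
    IsHyperinvariant T (LinearMap.range (A : H →ₗ[ℂ] H)).topologicalClosure := by
  refine ⟨Submodule.isClosed_topologicalClosure _, ?_⟩
  intro B hB x hx
  have hmaps : Set.MapsTo B (LinearMap.range (A : H →ₗ[ℂ] H) : Set H) (LinearMap.range (A : H →ₗ[ℂ] H) : Set H) := by
    rintro _ ⟨y, rfl⟩
    refine ⟨B y, ?_⟩
    have := congrArg (fun C => C y) (h B hB)
    simpa [ContinuousLinearMap.mul_apply] using this
  have hx' : x ∈ closure (LinearMap.range (A : H →ₗ[ℂ] H) : Set H) := hx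
  exact map_mem_closure B.continuous hx' hmaps

theorem stmt0 (T A₁ A₂ : H →L[ℂ] H)
    (h1 : A₁ ∈ bicommutant T) (h2 : A₂ ∈ bicommutant T)
    (h12 : A₁ * A₂ = 0) (h21 : A₂ * A₁ = 0)
    (hA1 : A₁ * A₁ ≠ 0) (hA2 : A₂ * A₂ ≠ 0) :
    (¬ (LinearMap.range (A₁ : H →ₗ[ℂ] H)).topologicalClosure ≤ (LinearMap.range (A₂ : H →ₗ[ℂ] H)).topologicalClosure) ∧
    (¬ (LinearMap.range (A₂ : H →ₗ[ℂ] H)).topologicalClosure ≤ (LinearMap.range (A₁ : H →ₗ[ℂ] H)).topologicalClosure) ∧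
    (¬ LinearMap.ker (A₁ : H →ₗ[ℂ] H) ≤ LinearMap.ker (A₂ : H →ₗ[ℂ] H)) ∧
    (¬ LinearMap.ker (A₂ : H →ₗ[ℂ] H) ≤ LinearMap.ker (A₁ : H →ₗ[ℂ] H)) ∧
    ∃ M N : Submodule ℂ H, IsHyperinvariant T M ∧ IsHyperinvariant T N ∧
      ¬ M ≤ N ∧ ¬ N ≤ M := by
  have key : ∀ (A B : H →L[ℂ] H), B * A = 0 → B * B ≠ 0 →
      ¬ (LinearMap.range (B : H →ₗ[ℂ] H)).topologicalClosure ≤ (LinearMap.range (A : H →ₗ[ℂ] H)).topologicalClosure := by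
    intro A B hBA hBB hle
    apply hBB
    ext x
    have hx : B x ∈ (LinearMap.range (A : H →ₗ[ℂ] H)).topologicalClosure :=
      hle ((LinearMap.range (B : H →ₗ[ℂ] H)).le_topologicalClosure ⟨x, rfl⟩)
    have := closure_range_le_ker hBA hx
    simpa [ContinuousLinearMap.mul_apply] using this
  have keyK : ∀ (A B : H →L[ℂ] H), A * B = 0 → B * B ≠ 0 →
      ¬ LinearMap.ker (A : H →ₗ[ℂ] H) ≤ LinearMap.ker (B : H →ₗ[ℂ] H) := by
    intro A B hAB hBB hle
    apply hBB
    ext x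
    have : B x ∈ LinearMap.ker (A : H →ₗ[ℂ] H) := range_le_ker hAB ⟨x, rfl⟩
    have := hle this
    simpa [ContinuousLinearMap.mul_apply] using this
  refine ⟨key A₂ A₁ h12 hA1, key A₁ A₂ h21 hA2, keyK A₁ A₂ h12 hA2, keyK A₂ A₁ h21 hA1, ?_⟩
  exact ⟨_, _, hyper_closure_range h1, hyper_closure_range h2,
    key A₂ A₁ h12 hA1, key A₁ A₂ h21 hA2⟩
end

section
/- Let Γ be a rectifiable Jordan curve bounding a domain Ω, let f be in the Smirnov class E¹(Ω), let T be a bounded operator on a Banach space H with s(σ(T) ∩ Γ) = 0 (s the arc-length measure) and ess sup_{z∈Γ} |f(z)| ‖(zI−T)^{-1}‖ < ∞. Define A = (1/2πi) ∫_Γ f(z)(zI−T)^{-1} dz. Then A belongs to the double commutant {T}'' and for every natural number n, TⁿA = (1/2πi) ∫_Γ zⁿ f(z)(zI−T)^{-1} dz. -/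
open scoped Real
open MeasureTheory Filter

variable {H : Type*} [NormedAddCommGroup H] [NormedSpace ℂ H] [CompleteSpace H]

section AuxiliaryLemmas
open Set intervalIntegral Topology
open scoped ENNReal

set_option linter.unusedSectionVars false

lemma clm_norm_smul (a : ℂ) (R : H →L[ℂ] H) : ‖a • R‖ = ‖a‖ * ‖R‖ := norm_smul a R

lemma res_comm (T B : H →L[ℂ] H) (hB : B * T = T * B) (z : ℂ) :
    B * resolvent T z = resolvent T z * B := by
  by_cases hz : IsUnit (algebraMap ℂ (H →L[ℂ] H) z - T)
  · obtain ⟨u, hu⟩ := hz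
    have hc : Commute B (↑u) := by
      unfold Commute SemiconjBy
      rw [hu]
      simp only [mul_sub, sub_mul, Algebra.algebraMap_eq_smul_one, smul_mul_assoc,
        mul_smul_comm, one_mul, mul_one, hB]
    have h2 := hc.units_inv_right
    rw [resolvent, ← hu, Ring.inverse_unit]
    exact h2
  · rw [resolvent, Ring.inverse_non_unit _ hz, mul_zero, zero_mul]

lemma T_mul_res (T : H →L[ℂ] H) {z : ℂ} (hz : z ∉ spectrum ℂ T) :
    T * resolvent T z = z • resolvent T z - 1 := by
  obtain ⟨u, hu⟩ := spectrum.notMem_iff.mp hz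
  have hres : resolvent T z = ↑u⁻¹ := by rw [resolvent, ← hu, Ring.inverse_unit]
  have h1 : (algebraMap ℂ (H →L[ℂ] H) z - T) * resolvent T z = 1 := by
    rw [hres, ← hu, u.mul_inv]
  rw [Algebra.algebraMap_eq_smul_one, sub_mul, smul_mul_assoc, one_mul] at h1
  rw [← h1]; abel

lemma unit_mul_res (T : H →L[ℂ] H) {z : ℂ} (hz : z ∉ spectrum ℂ T) :
    (z • (1 : H →L[ℂ] H) - T) * resolvent T z = 1 := by
  obtain ⟨u, hu⟩ := spectrum.notMem_iff.mp hz
  have hres : resolvent T z = ↑u⁻¹ := by rw [resolvent, ← hu, Ring.inverse_unit]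
  rw [← Algebra.algebraMap_eq_smul_one, hres, ← hu, u.mul_inv]

lemma bv_deriv_integrableOn (γ : ℝ → ℂ) (hγ : eVariationOn γ (Set.Icc 0 1) ≠ ⊤) :
    MeasureTheory.IntegrableOn (deriv γ) (Set.Ioc (0:ℝ) 1) := by
  set Vr : ℝ := (eVariationOn γ (Set.Icc 0 1)).toReal with hVrdef
  set v : ℝ → ℝ := fun t => (eVariationOn γ (Set.Icc 0 1 ∩ Set.Icc 0 t)).toReal with hvdef
  have hfin : ∀ t : ℝ, eVariationOn γ (Set.Icc 0 1 ∩ Set.Icc 0 t) ≠ ⊤ := fun t =>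
    ne_top_of_le_ne_top hγ (eVariationOn.mono γ inter_subset_left)
  have hmono : Monotone v := fun s t hst =>
    ENNReal.toReal_mono (hfin t)
      (eVariationOn.mono γ (inter_subset_inter_right _ (Icc_subset_Icc_right hst)))
  have hv0 : ∀ t, 0 ≤ v t := fun t => ENNReal.toReal_nonneg
  have hvle : ∀ t, v t ≤ Vr := fun t =>
    ENNReal.toReal_mono hγ (eVariationOn.mono γ inter_subset_left)
  have hVr0 : 0 ≤ Vr := ENNReal.toReal_nonneg
  -- key estimate
  have E1 : ∀ s t : ℝ, 0 ≤ s → s ≤ t → t ≤ 1 → ‖γ t - γ s‖ ≤ v t - v s := by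
    intro s t hs hst ht
    have key := eVariationOn.Icc_add_Icc γ hs hst (show s ∈ Set.Icc (0:ℝ) 1 from ⟨hs, hst.trans ht⟩)
    have hmidfin : eVariationOn γ (Set.Icc 0 1 ∩ Set.Icc s t) ≠ ⊤ :=
      ne_top_of_le_ne_top hγ (eVariationOn.mono γ inter_subset_left)
    have hed : edist (γ s) (γ t) ≤ eVariationOn γ (Set.Icc 0 1 ∩ Set.Icc s t) :=
      eVariationOn.edist_le γ ⟨⟨hs, hst.trans ht⟩, le_rfl, hst⟩
        ⟨⟨hs.trans hst, ht⟩, hst, le_rfl⟩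
    have h2 : ‖γ t - γ s‖ = (edist (γ s) (γ t)).toReal := by
      rw [edist_comm, edist_dist, dist_eq_norm, ENNReal.toReal_ofReal (norm_nonneg _)]
    rw [h2]
    have h3 := ENNReal.toReal_mono hmidfin hed
    have h4 : v s + (eVariationOn γ (Set.Icc 0 1 ∩ Set.Icc s t)).toReal = v t := by
      rw [hvdef]; dsimp only
      rw [← ENNReal.toReal_add (hfin s) hmidfin, key]
    linarith
  -- sequence of difference quotients
  set F : ℕ → ℝ → ℝ≥0∞ := fun k t =>
    ENNReal.ofReal ((k + 1 : ℝ) * (v (t + 1 / (k + 1)) - v t)) with hFdef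
  have hmeasv : Measurable v := hmono.measurable
  have hmeasF : ∀ k, Measurable (F k) := by
    intro k
    exact (measurable_const.mul ((hmeasv.comp (measurable_add_const _)).sub
      hmeasv)).ennreal_ofReal
  -- pointwise bound
  have P : ∀ t ∈ Set.Ioo (0:ℝ) 1, (‖deriv γ t‖₊ : ℝ≥0∞) ≤ liminf (fun k => F k t) atTop := by
    intro t ht
    by_cases hdiff : DifferentiableAt ℝ γ t
    · have hd := hdiff.hasDerivAt
      rw [hasDerivAt_iff_tendsto_slope] at hd
      have hto : Tendsto (fun k : ℕ => t + 1 / (k + 1 : ℝ)) atTop (𝓝[≠] t) := by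
        rw [tendsto_nhdsWithin_iff]
        constructor
        · have := tendsto_one_div_add_atTop_nhds_zero_nat (𝕜 := ℝ)
          have h2 := this.const_add t
          simpa using h2
        · filter_upwards with k
          have : (0:ℝ) < 1 / (k + 1 : ℝ) := by positivity
          simp only [Set.mem_compl_iff, Set.mem_singleton_iff]
          intro h
          nlinarith [h]
    -- slope along the sequence tends to deriv
      have h1 : Tendsto (fun k : ℕ => slope γ t (t + 1 / (k + 1 : ℝ))) atTop
          (𝓝 (deriv γ t)) := hd.comp hto
      have h2 : Tendsto (fun k : ℕ => ENNReal.ofReal ‖slope γ t (t + 1 / (k + 1 : ℝ))‖) atTop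
          (𝓝 (ENNReal.ofReal ‖deriv γ t‖)) :=
        (ENNReal.continuous_ofReal.tendsto _).comp h1.norm
      have hsmall : ∀ᶠ k : ℕ in atTop, 1 / (k + 1 : ℝ) < 1 - t := by
        have := tendsto_one_div_add_atTop_nhds_zero_nat (𝕜 := ℝ)
        exact this.eventually (eventually_lt_nhds (by linarith [ht.2]))
      have hle : ∀ᶠ k : ℕ in atTop,
          ENNReal.ofReal ‖slope γ t (t + 1 / (k + 1 : ℝ))‖ ≤ F k t := by
        filter_upwards [hsmall] with k hk
        have hc : (0:ℝ) < 1 / (k + 1 : ℝ) := by positivity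
        have hslope : slope γ t (t + 1 / (k + 1 : ℝ))
            = (k + 1 : ℝ) • (γ (t + 1 / (k + 1 : ℝ)) - γ t) := by
          rw [slope_def_module]
          congr 1
          have ht1 : t + 1 / (k + 1 : ℝ) - t = 1 / (k + 1 : ℝ) := by ring
          rw [ht1, one_div, inv_inv]
        apply ENNReal.ofReal_le_ofReal
        rw [hslope, norm_smul]
        have hEst := E1 t (t + 1 / (k + 1 : ℝ)) ht.1.le (by linarith) (by linarith)
        have hk1 : ‖(k + 1 : ℝ)‖ = (k + 1 : ℝ) := by
          rw [Real.norm_eq_abs, abs_of_pos (by positivity)]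
        rw [hk1]
        have : (0:ℝ) ≤ k + 1 := by positivity
        nlinarith [norm_nonneg (γ (t + 1 / (k + 1 : ℝ)) - γ t)]
      calc (‖deriv γ t‖₊ : ℝ≥0∞) = ENNReal.ofReal ‖deriv γ t‖ :=
            (ofReal_norm _).symm
        _ = liminf (fun k : ℕ => ENNReal.ofReal ‖slope γ t (t + 1 / (k + 1 : ℝ))‖) atTop :=
            h2.liminf_eq.symm
        _ ≤ liminf (fun k => F k t) atTop := liminf_le_liminf hle
    · rw [deriv_zero_of_not_differentiableAt hdiff]
      simp
  -- integral bound for each k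
  have hIvInt : ∀ a b : ℝ, IntervalIntegrable v volume a b := by
    intro a b
    rw [intervalIntegrable_iff]
    apply Integrable.mono' (integrableOn_const (by rw [Set.uIoc]; exact measure_Ioc_lt_top.ne))
      hmeasv.aestronglyMeasurable.restrict
    filter_upwards with t
    rw [Real.norm_eq_abs, abs_of_nonneg (hv0 t)]
    exact hvle t
  have bound : ∀ k : ℕ, (∫⁻ t in Set.Ioo (0:ℝ) 1, F k t) ≤ ENNReal.ofReal Vr := by
    intro k
    set c : ℝ := 1 / (k + 1) with hcdef
    have hc : 0 < c := by positivity
    have hintgr : IntegrableOn (fun t => (k + 1 : ℝ) * (v (t + c) - v t)) (Set.Ioo 0 1) := by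
      apply Integrable.mono' (g := fun _ => (k + 1 : ℝ) * Vr)
        (integrableOn_const measure_Ioo_lt_top.ne)
        ((measurable_const.mul ((hmeasv.comp (measurable_add_const _)).sub
          hmeasv)).aestronglyMeasurable.restrict)
      filter_upwards with t
      show ‖(k + 1 : ℝ) * (v (t + c) - v t)‖ ≤ (k + 1 : ℝ) * Vr
      rw [Real.norm_eq_abs, abs_mul, abs_of_pos (show (0:ℝ) < k+1 by positivity)]
      have h1 : v t ≤ v (t + c) := hmono (by linarith)
      have h2 : |v (t + c) - v t| ≤ Vr := by
        rw [abs_of_nonneg (by linarith)]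
        have := hvle (t + c); have := hv0 t; linarith
      exact mul_le_mul_of_nonneg_left h2 (by positivity)
    have hnonneg : 0 ≤ᵐ[volume.restrict (Set.Ioo (0:ℝ) 1)]
        fun t => (k + 1 : ℝ) * (v (t + c) - v t) := by
      filter_upwards with t
      have h1 : v t ≤ v (t + c) := hmono (by linarith)
      have : (0:ℝ) ≤ (k+1:ℝ) := by positivity
      exact mul_nonneg this (by linarith)
    rw [hFdef]
    rw [← ofReal_integral_eq_lintegral_ofReal hintgr hnonneg]
    apply ENNReal.ofReal_le_ofReal
    -- compute the integral
    have e0 : ∫ t in Set.Ioo (0:ℝ) 1, (k + 1 : ℝ) * (v (t + c) - v t)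
        = ∫ t in (0:ℝ)..1, (k + 1 : ℝ) * (v (t + c) - v t) := by
      rw [intervalIntegral.integral_of_le zero_le_one, ← integral_Ioc_eq_integral_Ioo]
    rw [e0, intervalIntegral.integral_const_mul]
    have hvc : IntervalIntegrable (fun t => v (t + c)) volume 0 1 := by
      have := (hIvInt (0 + c) (1 + c)).comp_add_right c
      simpa using this
    rw [intervalIntegral.integral_sub hvc (hIvInt 0 1)]
    have e1 : ∫ t in (0:ℝ)..1, v (t + c) = ∫ t in c..(1+c), v t := by
      have := intervalIntegral.integral_comp_add_right (a := (0:ℝ)) (b := 1) (f := v) c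
      simpa using this
    have e2 : ∫ t in c..(1+c:ℝ), v t = (∫ t in c..(1:ℝ), v t) + ∫ t in (1:ℝ)..(1+c), v t :=
      (intervalIntegral.integral_add_adjacent_intervals (hIvInt c 1) (hIvInt 1 (1+c))).symm
    have e3 : ∫ t in (0:ℝ)..1, v t = (∫ t in (0:ℝ)..c, v t) + ∫ t in c..(1:ℝ), v t :=
      (intervalIntegral.integral_add_adjacent_intervals (hIvInt 0 c) (hIvInt c 1)).symm
    have e4 : ∫ t in (1:ℝ)..(1+c), v t ≤ ∫ t in (1:ℝ)..(1+c), Vr := by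
      apply intervalIntegral.integral_mono_on (by linarith) (hIvInt 1 (1+c))
        intervalIntegrable_const
      intro t _; exact hvle t
    have e5 : (0:ℝ) ≤ ∫ t in (0:ℝ)..c, v t :=
      intervalIntegral.integral_nonneg (by linarith) (fun t _ => hv0 t)
    have e6 : ∫ t in (1:ℝ)..(1+c), (Vr:ℝ) = c * Vr := by
      rw [intervalIntegral.integral_const]; simp [smul_eq_mul]
    have hkc : (k + 1 : ℝ) * c = 1 := by
      rw [hcdef]; field_simp
    calc (k + 1 : ℝ) * ((∫ t in (0:ℝ)..1, v (t + c)) - ∫ t in (0:ℝ)..1, v t)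
        = (k + 1 : ℝ) * ((∫ t in (1:ℝ)..(1+c), v t) - ∫ t in (0:ℝ)..c, v t) := by
          rw [e1, e2, e3]; ring
      _ ≤ (k + 1 : ℝ) * (c * Vr) := by
          apply mul_le_mul_of_nonneg_left _ (by positivity)
          rw [← e6]; linarith
      _ = Vr := by rw [← mul_assoc, hkc, one_mul]
  -- conclude via Fatou
  have fatou : (∫⁻ t in Set.Ioo (0:ℝ) 1, (‖deriv γ t‖₊ : ℝ≥0∞)) ≤ ENNReal.ofReal Vr := by
    calc (∫⁻ t in Set.Ioo (0:ℝ) 1, (‖deriv γ t‖₊ : ℝ≥0∞))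
        ≤ ∫⁻ t in Set.Ioo (0:ℝ) 1, liminf (fun k => F k t) atTop := by
          apply lintegral_mono_ae
          filter_upwards [ae_restrict_mem measurableSet_Ioo] with t ht using P t ht
      _ ≤ liminf (fun k => ∫⁻ t in Set.Ioo (0:ℝ) 1, F k t) atTop :=
          lintegral_liminf_le fun k => hmeasF k
      _ ≤ ENNReal.ofReal Vr := by
          apply liminf_le_of_le
          · isBoundedDefault
          · intro b hb
            obtain ⟨k, hk⟩ := hb.exists
            exact hk.trans (bound k)
  constructor
  · exact (measurable_deriv γ).aestronglyMeasurable
  · show (∫⁻ t, (‖deriv γ t‖₊ : ℝ≥0∞) ∂(volume.restrict (Set.Ioc (0:ℝ) 1))) < ⊤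
    rw [← MeasureTheory.Measure.restrict_congr_set Ioo_ae_eq_Ioc]
    exact lt_of_le_of_lt fatou ENNReal.ofReal_lt_top

end AuxiliaryLemmas

set_option maxHeartbeats 1000000 in
/-- Lemma on the contour-integral operator `A`: it lies in the double commutant, and
`TⁿA` is given by inserting `zⁿ` in the integrand. The rectifiable Jordan curve `Γ`
is parametrized by `γ` on `[0,1]`, `Ω` is the bounded Jordan domain it bounds, the
Smirnov-class membership of `f` is encoded by analyticity in `Ω` together with the
vanishing of all boundary moments `∫_Γ zⁿ f(z) dz = 0`. -/
theorem stmt5 (T : H →L[ℂ] H) (γ : ℝ → ℂ) (Ω : Set ℂ) (f : ℂ → ℂ)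
    (hγc : ContinuousOn γ (Set.Icc 0 1)) (hγcl : γ 0 = γ 1)
    (hγinj : Set.InjOn γ (Set.Ico 0 1))
    (hγrect : eVariationOn γ (Set.Icc 0 1) ≠ ⊤)
    (hΩo : IsOpen Ω) (hΩb : Bornology.IsBounded Ω)
    (hΩfr : frontier Ω = γ '' Set.Icc 0 1)
    (hf : DifferentiableOn ℂ f Ω)
    (hmom : ∀ n : ℕ, ∫ t in (0:ℝ)..1, (γ t) ^ n * f (γ t) * deriv γ t = 0)
    (hspec : ∀ᵐ t ∂(volume.restrict (Set.Ioc (0:ℝ) 1)), γ t ∉ spectrum ℂ T)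
    (hbd : ∃ C : ℝ, ∀ᵐ t ∂(volume.restrict (Set.Ioc (0:ℝ) 1)),
      ‖f (γ t)‖ * ‖resolvent T (γ t)‖ ≤ C)
    (A : H →L[ℂ] H)
    (hA : A = (2 * π * Complex.I)⁻¹ •
      ∫ t in (0:ℝ)..1, (f (γ t) * deriv γ t) • resolvent T (γ t)) :
    A ∈ bicommutant T ∧
    ∀ n : ℕ, 1 ≤ n → T ^ n * A = (2 * π * Complex.I)⁻¹ •
      ∫ t in (0:ℝ)..1, ((γ t) ^ n * f (γ t) * deriv γ t) • resolvent T (γ t) := by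
    classical
  obtain ⟨C, hC⟩ := hbd
  have hγ'int : IntegrableOn (deriv γ) (Set.Ioc (0:ℝ) 1) := bv_deriv_integrableOn γ hγrect
  rcases subsingleton_or_nontrivial H with hH | hH
  · haveI : Subsingleton (H →L[ℂ] H) :=
      ⟨fun X Y => ContinuousLinearMap.ext fun x => Subsingleton.elim _ _⟩
    exact ⟨fun B _ => Subsingleton.elim _ _, fun n _ => Subsingleton.elim _ _⟩
  set g : ℝ → (H →L[ℂ] H) := fun t => (f (γ t) * deriv γ t) • resolvent T (γ t) with hgdef
  have hgp : ∀ n : ℕ, (fun t => ((γ t) ^ n * f (γ t) * deriv γ t) • resolvent T (γ t))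
      = fun t => (γ t) ^ n • g t := by
    intro n; funext t; rw [hgdef]; simp only [mul_assoc, mul_smul]
  obtain ⟨M, hM⟩ := isCompact_Icc.exists_bound_of_continuousOn hγc
  have hM0 : (0:ℝ) ≤ M :=
    le_trans (norm_nonneg (γ 0)) (hM 0 ⟨le_refl _, zero_le_one⟩)
  by_cases hm : AEStronglyMeasurable g (volume.restrict (Set.Ioc (0:ℝ) 1))
  · -- measurable (good) case
    have hg_ae_bd : ∀ᵐ t ∂(volume.restrict (Set.Ioc (0:ℝ) 1)), ‖g t‖ ≤ C * ‖deriv γ t‖ := by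
      filter_upwards [hC] with t ht
      rw [hgdef]; dsimp only
      calc ‖(f (γ t) * deriv γ t) • resolvent T (γ t)‖
          = ‖f (γ t) * deriv γ t‖ * ‖resolvent T (γ t)‖ := clm_norm_smul _ _
        _ = (‖f (γ t)‖ * ‖resolvent T (γ t)‖) * ‖deriv γ t‖ := by rw [norm_mul]; ring
        _ ≤ C * ‖deriv γ t‖ := mul_le_mul_of_nonneg_right ht (norm_nonneg _)
    have hgn_int : ∀ n : ℕ, IntervalIntegrable (fun t => (γ t)^n • g t) volume 0 1 := by
      intro n
      rw [intervalIntegrable_iff_integrableOn_Ioc_of_le zero_le_one]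
      have haesm : AEStronglyMeasurable (fun t => (γ t)^n • g t)
          (volume.restrict (Set.Ioc (0:ℝ) 1)) :=
        (((hγc.mono Set.Ioc_subset_Icc_self).pow n).aestronglyMeasurable
          measurableSet_Ioc).smul hm
      refine Integrable.mono' (hγ'int.norm.const_mul (M^n * C)) haesm ?_
      filter_upwards [hg_ae_bd, ae_restrict_mem measurableSet_Ioc] with t h1 h2
      calc ‖(γ t)^n • g t‖ = ‖(γ t)^n‖ * ‖g t‖ := clm_norm_smul _ _
        _ = ‖γ t‖^n * ‖g t‖ := by rw [norm_pow]
        _ ≤ M^n * (C * ‖deriv γ t‖) := by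
            apply mul_le_mul (pow_le_pow_left₀ (norm_nonneg _)
              (hM t (Set.Ioc_subset_Icc_self h2)) n) h1 (norm_nonneg _) (by positivity)
        _ = M^n * C * ‖deriv γ t‖ := by ring
    have hg_int : IntervalIntegrable g volume 0 1 := by
      have := hgn_int 0
      simpa using this
    have hL : ∀ (S : H →L[ℂ] H) (F : ℝ → (H →L[ℂ] H)), IntervalIntegrable F volume 0 1 →
        S * (∫ t in (0:ℝ)..1, F t) = ∫ t in (0:ℝ)..1, S * F t := by
      intro S F hF
      have := (ContinuousLinearMap.mul ℂ (H →L[ℂ] H) S).intervalIntegral_comp_comm hF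
      simpa [ContinuousLinearMap.mul_apply'] using this.symm
    have hR : ∀ (S : H →L[ℂ] H) (F : ℝ → (H →L[ℂ] H)), IntervalIntegrable F volume 0 1 →
        (∫ t in (0:ℝ)..1, F t) * S = ∫ t in (0:ℝ)..1, F t * S := by
      intro S F hF
      have := ((ContinuousLinearMap.mul ℂ (H →L[ℂ] H)).flip S).intervalIntegral_comp_comm hF
      simpa [ContinuousLinearMap.flip_apply, ContinuousLinearMap.mul_apply'] using this.symm
    have hTgn_int : ∀ n : ℕ, IntervalIntegrable (fun t => T * ((γ t)^n • g t)) volume 0 1 := by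
      intro n
      have h := (intervalIntegrable_iff_integrableOn_Ioc_of_le zero_le_one).mp (hgn_int n)
      rw [intervalIntegrable_iff_integrableOn_Ioc_of_le zero_le_one]
      exact (ContinuousLinearMap.mul ℂ (H →L[ℂ] H) T).integrable_comp h
    have hstep : ∀ n : ℕ, ∀ᵐ t ∂(volume.restrict (Set.Ioc (0:ℝ) 1)),
        T * ((γ t)^n • g t) = (γ t)^(n+1) • g t
          - ((γ t)^n * (f (γ t) * deriv γ t)) • (1 : H →L[ℂ] H) := by
      intro n
      filter_upwards [hspec] with t ht
      rw [hgdef]; dsimp only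
      rw [smul_smul, mul_smul_comm, T_mul_res T ht, smul_sub, smul_smul, smul_smul]
      congr 2
      ring
    have hsn1_int : ∀ n : ℕ, IntervalIntegrable
        (fun t => ((γ t)^n * (f (γ t) * deriv γ t)) • (1 : H →L[ℂ] H)) volume 0 1 := by
      intro n
      rw [intervalIntegrable_iff_integrableOn_Ioc_of_le zero_le_one]
      have h1 := (intervalIntegrable_iff_integrableOn_Ioc_of_le zero_le_one).mp
        ((hgn_int (n+1)).sub (hTgn_int n))
      apply h1.congr
      filter_upwards [hstep n] with t ht
      rw [ht]; abel
    have claim : ∀ n : ℕ, T ^ n * A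
        = (2 * π * Complex.I)⁻¹ • ∫ t in (0:ℝ)..1, (γ t)^n • g t := by
      intro n
      induction n with
      | zero =>
        rw [pow_zero, one_mul, hA]
        congr 1
        apply intervalIntegral.integral_congr
        intro t _
        simp [hgdef]
      | succ n ih =>
        rw [pow_succ', mul_assoc, ih, mul_smul_comm, hL T _ (hgn_int n)]
        have hcg : ∫ t in (0:ℝ)..1, T * ((γ t)^n • g t)
            = ∫ t in (0:ℝ)..1, ((γ t)^(n+1) • g t
              - ((γ t)^n * (f (γ t) * deriv γ t)) • (1 : H →L[ℂ] H)) := by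
          apply intervalIntegral.integral_congr_ae
          have h2 := (ae_restrict_iff' measurableSet_Ioc).mp (hstep n)
          rw [Set.uIoc_of_le zero_le_one]
          exact h2
        rw [hcg, intervalIntegral.integral_sub (hgn_int (n+1)) (hsn1_int n),
          intervalIntegral.integral_smul_const]
        have hm0 : (∫ t in (0:ℝ)..1, (γ t)^n * (f (γ t) * deriv γ t)) = 0 := by
          rw [← hmom n]
          apply intervalIntegral.integral_congr
          intro t _
          ring
        rw [hm0, zero_smul, sub_zero]
    constructor
    · intro B hB
      rw [hA, smul_mul_assoc, mul_smul_comm]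
      congr 1
      calc (∫ t in (0:ℝ)..1, g t) * B = ∫ t in (0:ℝ)..1, g t * B := hR B g hg_int
        _ = ∫ t in (0:ℝ)..1, B * g t := by
            apply intervalIntegral.integral_congr
            intro t _
            rw [hgdef]; dsimp only
            rw [smul_mul_assoc, mul_smul_comm, res_comm T B hB]
        _ = B * ∫ t in (0:ℝ)..1, g t := (hL B g hg_int).symm
    · intro n _
      rw [hgp n]
      exact claim n
  · -- non-measurable (degenerate) case
    have hnint : ∀ n : ℕ, ¬ IntervalIntegrable (fun t => (γ t)^n • g t) volume 0 1 := by
      intro n hint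
      apply hm
      have hint' := (intervalIntegrable_iff_integrableOn_Ioc_of_le zero_le_one).mp hint
      have haesm := hint'.aestronglyMeasurable
      have hZ : volume ({t : ℝ | γ t = 0} ∩ Set.Ioc 0 1) = 0 := by
        have hcnt : volume (insert (1:ℝ) ({t : ℝ | γ t = 0} ∩ Set.Ico 0 1)) = 0 := by
          apply Set.Countable.measure_zero
          apply Set.Countable.insert
          apply Set.Subsingleton.countable
          rintro a ⟨ha, ha'⟩ b ⟨hb, hb'⟩
          exact hγinj ha' hb' (ha.trans hb.symm)
        refine measure_mono_null ?_ hcnt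
        rintro t ⟨h0, ht⟩
        rcases eq_or_lt_of_le ht.2 with h | h
        · exact Set.mem_insert_iff.mpr (Or.inl h)
        · exact Set.mem_insert_iff.mpr (Or.inr ⟨h0, ht.1.le, h⟩)
      have hae : ∀ᵐ t ∂(volume.restrict (Set.Ioc (0:ℝ) 1)), γ t ≠ 0 := by
        rw [ae_iff, Measure.restrict_apply' measurableSet_Ioc]
        apply measure_mono_null _ hZ
        intro t ht
        simp only [Set.mem_inter_iff, Set.mem_setOf_eq] at *
        exact ⟨not_not.mp ht.1, ht.2⟩
      apply AEStronglyMeasurable.congr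
        (f := fun t => ((γ t)^n)⁻¹ • ((γ t)^n • g t))
      · exact ((((hγc.mono Set.Ioc_subset_Icc_self).aemeasurable
          measurableSet_Ioc).pow_const n).inv.aestronglyMeasurable).smul haesm
      · filter_upwards [hae] with t ht
        rw [inv_smul_smul₀ (pow_ne_zero n ht)]
    have hA0 : A = 0 := by
      rw [hA, intervalIntegral.integral_undef, smul_zero]
      intro hcontra
      apply hnint 0
      simpa using hcontra
    constructor
    · intro B _
      rw [hA0, zero_mul, mul_zero]
    · intro n _
      rw [hA0, mul_zero, hgp n, intervalIntegral.integral_undef (hnint n), smul_zero]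
end
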